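/- Let H, W, k be positive integers with k ∣ H and k ∣ W, and define the nearest-neighbor down-sampling frequency response β(u',v') := (1/k²) · Σ_{s=0}^{k-1} Σ_{t=0}^{k-1} exp(2πi(u's/(2H) + v't/(2W))). For every integer u' with -H ≤ u' ≤ H-1 and every integer v' with -W ≤ v' ≤ W-1, β(u',v') ≠ 0 if and only if u' is not a nonzero integer multiple of 2H/k and v' is not a nonzero integer multiple of 2W/k. (In particular, for k ≥ 2 there exist frequencies outside the low-frequency region {-H/k,…,H/k-1}×{-W/k,…,W/k-1} at which β is nonzero.) -/

import Mathlib

lemma sum_Icc_toRange (k : ℤ) (f : ℤ → ℂ) :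
    ∑ s ∈ Finset.Icc (0:ℤ) (k-1), f s = ∑ i ∈ Finset.range k.toNat, f i := by
  refine Finset.sum_nbij' (fun s => s.toNat) (fun i => (i:ℤ)) ?_ ?_ ?_ ?_ ?_
  · intro a ha; simp_all
  · intro a ha; simp_all
  · intro a ha; simp_all
  · intro a ha; simp
  · intro a ha; simp_all

open Complex in
lemma oneDim (H k : ℤ) (hH : 0 < H) (hk : 0 < k) (hkH : k ∣ H) (u : ℤ)
    (h1 : -H ≤ u) (h2 : u ≤ H - 1) :
    (∑ s ∈ Finset.Icc (0:ℤ) (k-1),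
      Complex.exp ((2*(Real.pi:ℂ)*Complex.I) * ((u:ℂ)*(s:ℂ)/(2*(H:ℂ))))) ≠ 0 ↔
    ¬∃ a : ℤ, a ≠ 0 ∧ u = a * (2*(H/k)) := by
  obtain ⟨m, hm⟩ := hkH
  have hm0 : 0 < m := by nlinarith
  have hHk : H / k = m := by rw [hm]; exact Int.mul_ediv_cancel_left m (by omega)
  have hH0 : (2*(H:ℂ)) ≠ 0 := by
    exact mul_ne_zero two_ne_zero (by exact_mod_cast hH.ne')
  have hpi : (2*(Real.pi:ℂ)*Complex.I) ≠ 0 := by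
    simp [Real.pi_ne_zero, Complex.I_ne_zero]
  set z := Complex.exp ((2*(Real.pi:ℂ)*Complex.I) * ((u:ℂ)/(2*(H:ℂ)))) with hz
  have hterm : ∀ i : ℕ, Complex.exp ((2*(Real.pi:ℂ)*Complex.I) * ((u:ℂ)*((i:ℤ):ℂ)/(2*(H:ℂ)))) = z^i := by
    intro i
    rw [hz, ← Complex.exp_nat_mul]
    congr 1
    push_cast
    ring
  have hsum : (∑ s ∈ Finset.Icc (0:ℤ) (k-1),
      Complex.exp ((2*(Real.pi:ℂ)*Complex.I) * ((u:ℂ)*(s:ℂ)/(2*(H:ℂ)))))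
      = ∑ i ∈ Finset.range k.toNat, z^i := by
    rw [sum_Icc_toRange]
    exact Finset.sum_congr rfl fun i _ => hterm i
  -- characterize z^k.toNat = 1
  have hzk : z ^ k.toNat = Complex.exp ((2*(Real.pi:ℂ)*Complex.I) * ((u:ℂ)*(k:ℂ)/(2*(H:ℂ)))) := by
    rw [hz, ← Complex.exp_nat_mul]
    have : ((k.toNat : ℂ)) = (k : ℂ) := by
      norm_cast
      omega
    rw [this]; ring_nf
  have key : z ^ k.toNat = 1 ↔ ∃ a : ℤ, u = a * (2*m) := by
    rw [hzk, Complex.exp_eq_one_iff]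
    constructor
    · rintro ⟨n, hn⟩
      refine ⟨n, ?_⟩
      have : (u:ℂ)*(k:ℂ) = (n:ℂ)*(2*(H:ℂ)) := by
        field_simp at hn
        have h3 : (2*(Real.pi:ℂ)*Complex.I) * ((u:ℂ)*(k:ℂ)) = (2*(Real.pi:ℂ)*Complex.I) * ((n:ℂ)*(2*(H:ℂ))) := by
          have hHc : (H:ℂ) ≠ 0 := by exact_mod_cast hH.ne'
          rw [div_eq_iff hHc] at hn
          linear_combination (2*(Real.pi:ℂ)*Complex.I) * hn
        exact mul_left_cancel₀ hpi h3
      have h2' : u * k = n * (2*H) := by exact_mod_cast this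
      refine mul_left_cancel₀ (a := k) (by omega) ?_
      rw [hm] at h2'
      linarith [h2']
    · rintro ⟨a, ha⟩
      refine ⟨a, ?_⟩
      have : (u:ℂ) = (a:ℂ)*(2*(m:ℂ)) := by exact_mod_cast ha
      rw [this]
      have hmC : (H:ℂ) = (k:ℂ)*(m:ℂ) := by exact_mod_cast hm
      have hkC : (k:ℂ) ≠ 0 := by exact_mod_cast hk.ne'
      have hmCne : (m:ℂ) ≠ 0 := by exact_mod_cast hm0.ne'
      rw [hmC]
      field_simp
  rw [ne_eq, hsum, hHk]
  by_cases hz1 : z = 1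
  · -- then u = 0
    have hu0 : u = 0 := by
      rw [hz, Complex.exp_eq_one_iff] at hz1
      obtain ⟨n, hn⟩ := hz1
      have h3 : (2*(Real.pi:ℂ)*Complex.I) * (u:ℂ) = (2*(Real.pi:ℂ)*Complex.I) * ((n:ℂ)*(2*(H:ℂ))) := by
        field_simp at hn
        have hHc : (H:ℂ) ≠ 0 := by exact_mod_cast hH.ne'
        rw [div_eq_iff hHc] at hn
        linear_combination (2*(Real.pi:ℂ)*Complex.I) * hn
      have h4 : (u:ℂ) = (n:ℂ)*(2*(H:ℂ)) := mul_left_cancel₀ hpi h3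
      have h5 : u = n * (2*H) := by exact_mod_cast h4
      have hn0 : n = 0 := by
        rcases lt_trichotomy n 0 with h | h | h
        · nlinarith [mul_le_mul_of_nonneg_right (by omega : n ≤ -1) (by omega : (0:ℤ) ≤ 2*H)]
        · exact h
        · nlinarith [mul_le_mul_of_nonneg_right (by omega : 1 ≤ n) (by omega : (0:ℤ) ≤ 2*H)]
      rw [hn0] at h5
      simpa using h5
    constructor
    · intro _
      rintro ⟨a, ha0, ha⟩
      rw [hu0] at ha
      have : a = 0 := by
        rcases mul_eq_zero.mp ha.symm with h | h
        · exact h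
        · omega
      exact ha0 this
    · intro _
      simp only [hz1, one_pow, Finset.sum_const, Finset.card_range, nsmul_eq_mul, mul_one]
      intro hc
      have : (k.toNat : ℂ) ≠ 0 := by
        exact_mod_cast (by omega : k.toNat ≠ 0)
      exact this hc
  · have hu0 : u ≠ 0 := by
      intro h
      apply hz1
      rw [hz, h]
      simp
    rw [geom_sum_eq hz1]
    rw [div_eq_zero_iff]
    simp only [sub_eq_zero, hz1, or_false, not_or]
    rw [key]
    constructor
    · intro hne
      rintro ⟨a, _, ha⟩
      exact hne ⟨a, ha⟩
    · intro hne
      rintro ⟨a, ha⟩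
      apply hne
      refine ⟨a, ?_, ha⟩
      rintro rfl
      simp at ha
      exact hu0 ha


/-- The nearest-neighbor `k`-fold down-sampling frequency response on the `2H × 2W` grid:
`β(u',v') = (1/k²) ∑_{s=0}^{k-1} ∑_{t=0}^{k-1} exp(2πi(u's/(2H) + v't/(2W)))`. -/
noncomputable def betaNN (H W k : ℤ) (u' v' : ℤ) : ℂ :=
  (1 / (k : ℂ) ^ 2) *
    ∑ s ∈ Finset.Icc (0 : ℤ) (k - 1), ∑ t ∈ Finset.Icc (0 : ℤ) (k - 1),
      Complex.exp ((2 * (Real.pi : ℂ) * Complex.I) *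
        ((u' : ℂ) * (s : ℂ) / (2 * (H : ℂ)) + (v' : ℂ) * (t : ℂ) / (2 * (W : ℂ))))

/-- For frequencies `(u',v')` in the band `[-H, H-1] × [-W, W-1]`, the nearest-neighbor
down-sampling frequency response `β(u',v')` is nonzero if and only if `u'` is not a nonzero
integer multiple of `2H/k` and `v'` is not a nonzero integer multiple of `2W/k`. -/
theorem stmt_11 (H W k : ℤ) (hH : 0 < H) (hW : 0 < W) (hk : 0 < k)
    (hkH : k ∣ H) (hkW : k ∣ W) :
    ∀ u' v' : ℤ, -H ≤ u' → u' ≤ H - 1 → -W ≤ v' → v' ≤ W - 1 →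
      (betaNN H W k u' v' ≠ 0 ↔
        (¬ ∃ a : ℤ, a ≠ 0 ∧ u' = a * (2 * (H / k))) ∧
        (¬ ∃ b : ℤ, b ≠ 0 ∧ v' = b * (2 * (W / k)))) := by
  intro u' v' hu1 hu2 hv1 hv2
  have hfact : betaNN H W k u' v' = (1/(k:ℂ)^2) *
      ((∑ s ∈ Finset.Icc (0:ℤ) (k-1),
          Complex.exp ((2*(Real.pi:ℂ)*Complex.I) * ((u':ℂ)*(s:ℂ)/(2*(H:ℂ))))) *
       (∑ t ∈ Finset.Icc (0:ℤ) (k-1),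
          Complex.exp ((2*(Real.pi:ℂ)*Complex.I) * ((v':ℂ)*(t:ℂ)/(2*(W:ℂ)))))) := by
    rw [betaNN, Finset.sum_mul_sum]
    congr 1
    refine Finset.sum_congr rfl fun s _ => Finset.sum_congr rfl fun t _ => ?_
    rw [← Complex.exp_add]
    congr 1
    ring
  have hk2 : (1/(k:ℂ)^2) ≠ 0 := by
    have : (k:ℂ) ≠ 0 := by exact_mod_cast hk.ne'
    simp [this]
  rw [hfact, mul_ne_zero_iff, mul_ne_zero_iff, and_iff_right hk2]
  exact and_congr (oneDim H k hH hk hkH u' hu1 hu2) (oneDim W k hW hk hkW v' hv1 hv2)
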